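/- For a minimal dynamical system (X,T), two points x, y ∈ X are proximal if and only if there exists a minimal idempotent p in the Ellis semigroup E(X,T) with p(y) = x. -/

import Mathlib

/-- The Ellis semigroup of the action. -/
def Ellis (T : Type*) (X : Type*) [TopologicalSpace X] [SMul T X] : Set (X → X) :=
  closure (Set.range fun t : T => fun x : X => t • x)

/-- A two-sided ideal of a sub-semigroup `E` of `X → X` under composition. -/
def IsIdealIn {X : Type*} (E I : Set (X → X)) : Prop :=
  I ⊆ E ∧ I.Nonempty ∧ ∀ f ∈ E, ∀ g ∈ I, f ∘ g ∈ I ∧ g ∘ f ∈ I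

/-- A minimal idempotent of `E`: an idempotent belonging to every two-sided ideal. -/
def IsMinIdem {X : Type*} (E : Set (X → X)) (p : X → X) : Prop :=
  p ∈ E ∧ p ∘ p = p ∧ ∀ I : Set (X → X), IsIdealIn E I → p ∈ I

/-- Two points are proximal if the orbit of the pair comes arbitrarily close to the
diagonal. -/
def Proximal (T : Type*) {X : Type*} [MetricSpace X] [SMul T X] (x y : X) : Prop :=
  ∀ ε > 0, ∃ t : T, dist (t • x) (t • y) < ε

section Aux

variable {T : Type*} [Group T] {X : Type*} [MetricSpace X] [CompactSpace X] [MulAction T X]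

lemma ellis_closed : IsClosed (Ellis T X) := isClosed_closure

lemma ellis_compact : IsCompact (Ellis T X) := ellis_closed.isCompact

lemma smul_mem_ellis (t : T) : (fun x : X => t • x) ∈ Ellis T X :=
  subset_closure ⟨t, rfl⟩

lemma id_mem_ellis : (id : X → X) ∈ Ellis T X := by
  have h : (fun x : X => (1 : T) • x) = (id : X → X) := funext fun x => one_smul T x
  have := smul_mem_ellis (X := X) (1 : T)
  rwa [h] at this

lemma continuous_comp_right (g : X → X) : Continuous fun f : X → X => f ∘ g :=
  continuous_pi fun x => continuous_apply (g x)

lemma comp_mem_ellis (hcont : ∀ t : T, Continuous fun x : X => t • x)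
    {f g : X → X} (hf : f ∈ Ellis T X) (hg : g ∈ Ellis T X) : f ∘ g ∈ Ellis T X := by
  have step1 : ∀ (t : T), ∀ h ∈ Ellis T X, (fun x : X => t • x) ∘ h ∈ Ellis T X := by
    intro t h hh
    have hc : Continuous fun h : X → X => (fun x : X => t • x) ∘ h :=
      continuous_pi fun x => (hcont t).comp (continuous_apply x)
    have hmem : (fun h : X → X => (fun x : X => t • x) ∘ h) h ∈
        (fun h : X → X => (fun x : X => t • x) ∘ h) '' closure (Set.range fun s : T => fun x : X => s • x) :=
      Set.mem_image_of_mem _ hh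
    have h1 := image_closure_subset_closure_image hc hmem
    refine closure_mono ?_ h1
    rintro _ ⟨_, ⟨s, rfl⟩, rfl⟩
    exact ⟨t * s, funext fun x => mul_smul t s x⟩
  have hmem : (fun f : X → X => f ∘ g) f ∈
      (fun f : X → X => f ∘ g) '' closure (Set.range fun s : T => fun x : X => s • x) :=
    Set.mem_image_of_mem _ hf
  have h1 := image_closure_subset_closure_image (continuous_comp_right g) hmem
  have h2 : (fun f : X → X => f ∘ g) '' (Set.range fun s : T => fun x : X => s • x) ⊆
      Ellis T X := by
    rintro _ ⟨_, ⟨t, rfl⟩, rfl⟩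
    exact step1 t g hg
  exact closure_minimal h2 ellis_closed h1

end Aux

/-- For a minimal system `(X,T)` with `X` compact metric, `x, y` are proximal iff
there is a minimal idempotent `p` of the Ellis semigroup with `p y = x`. -/
theorem stmt6 {T : Type*} [Group T] {X : Type*} [MetricSpace X] [CompactSpace X]
    [MulAction T X]
    (hcont : ∀ t : T, Continuous fun x : X => t • x)
    (hmin : ∀ x : X, Dense (MulAction.orbit T x))
    (x y : X) :
    Proximal T x y ↔ ∃ p : X → X, IsMinIdem (Ellis T X) p ∧ p y = x := by
  constructor
  · -- forward direction
    intro h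
    -- Step 1: find q ∈ E with q x = q y
    set F : ℕ → Set (X → X) :=
      fun n => Ellis T X ∩ {f : X → X | dist (f x) (f y) ≤ 1 / (n + 1)} with hF
    have hFne : ∀ n, (F n).Nonempty := by
      intro n
      obtain ⟨t, ht⟩ := h (1 / (n + 1)) (by positivity)
      exact ⟨_, smul_mem_ellis t, le_of_lt ht⟩
    have hFcl : ∀ n, IsClosed (F n) := fun n =>
      ellis_closed.inter
        (isClosed_le ((continuous_apply x).dist (continuous_apply y)) continuous_const)
    have hFmono : ∀ m n : ℕ, m ≤ n → F n ⊆ F m := by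
      intro m n hmn f hf
      refine ⟨hf.1, ?_⟩
      have h2 : dist (f x) (f y) ≤ 1 / (n + 1) := hf.2
      refine h2.trans ?_
      gcongr
    have hFdir : Directed (· ⊇ ·) F := fun m n =>
      ⟨max m n, hFmono _ _ (le_max_left m n), hFmono _ _ (le_max_right m n)⟩
    obtain ⟨q, hq⟩ := IsCompact.nonempty_iInter_of_directed_nonempty_isCompact_isClosed
      F hFdir hFne (fun n => (hFcl n).isCompact) hFcl
    have hqE : q ∈ Ellis T X := (Set.mem_iInter.mp hq 0).1
    have hqxy : q x = q y := by
      have hle : dist (q x) (q y) ≤ 0 :=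
        ge_of_tendsto' tendsto_one_div_add_atTop_nhds_zero_nat
          (fun n => (Set.mem_iInter.mp hq n).2)
      exact dist_le_zero.mp hle
    -- Step 2: Zorn to get a minimal closed left ideal M inside E ∘ q
    set C : Set (Set (X → X)) :=
      {L | L ⊆ Ellis T X ∧ IsClosed L ∧ L.Nonempty ∧
        ∀ e ∈ Ellis T X, ∀ f ∈ L, e ∘ f ∈ L} with hC
    have hEqC : (fun f : X → X => f ∘ q) '' Ellis T X ∈ C := by
      refine ⟨?_, (ellis_compact.image (continuous_comp_right q)).isClosed, ?_, ?_⟩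
      · rintro _ ⟨g, hg, rfl⟩
        exact comp_mem_ellis hcont hg hqE
      · exact ⟨q, id, id_mem_ellis, rfl⟩
      · rintro e he _ ⟨g, hg, rfl⟩
        exact ⟨e ∘ g, comp_mem_ellis hcont he hg, rfl⟩
    have hchain : ∀ c ⊆ C, IsChain (· ⊆ ·) c → c.Nonempty →
        ∃ lb ∈ C, ∀ s ∈ c, lb ⊆ s := by
      intro c hcC hch hcne
      haveI : Nonempty c := hcne.to_subtype
      have hne : (⋂ L : c, (L : Set (X → X))).Nonempty := by
        apply IsCompact.nonempty_iInter_of_directed_nonempty_isCompact_isClosed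
        · rintro ⟨L, hL⟩ ⟨L', hL'⟩
          rcases hch.total hL hL' with hsub | hsub
          · exact ⟨⟨L, hL⟩, subset_rfl, hsub⟩
          · exact ⟨⟨L', hL'⟩, hsub, subset_rfl⟩
        · exact fun L => (hcC L.2).2.2.1
        · exact fun L => (hcC L.2).2.1.isCompact
        · exact fun L => (hcC L.2).2.1
      refine ⟨⋂ L : c, (L : Set (X → X)), ⟨?_, ?_, hne, ?_⟩, ?_⟩
      · obtain ⟨L0, hL0⟩ := hcne
        exact (Set.iInter_subset _ ⟨L0, hL0⟩).trans (hcC hL0).1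
      · exact isClosed_iInter fun L => (hcC L.2).2.1
      · intro e he f hf
        exact Set.mem_iInter.mpr fun L =>
          (hcC L.2).2.2.2 e he f (Set.mem_iInter.mp hf L)
      · exact fun s hs => Set.iInter_subset _ (⟨s, hs⟩ : c)
    obtain ⟨M, hMsub, hMmin⟩ :=
      zorn_superset_nonempty C hchain _ hEqC
    have hMC : M ∈ C := hMmin.1
    -- every element of M merges x and y
    have hmerge : ∀ f ∈ M, f x = f y := by
      intro f hf
      obtain ⟨g, _, rfl⟩ := hMsub hf
      show g (q x) = g (q y)
      rw [hqxy]
    -- E ∘ f = M for all f ∈ M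
    have key : ∀ f ∈ M, (fun e : X → X => e ∘ f) '' Ellis T X = M := by
      intro f hf
      have hfE : f ∈ Ellis T X := hMC.1 hf
      have hsub : (fun e : X → X => e ∘ f) '' Ellis T X ⊆ M := by
        rintro _ ⟨e, he, rfl⟩
        exact hMC.2.2.2 e he f hf
      have hCmem : (fun e : X → X => e ∘ f) '' Ellis T X ∈ C := by
        refine ⟨?_, (ellis_compact.image (continuous_comp_right f)).isClosed, ?_, ?_⟩
        · rintro _ ⟨e, he, rfl⟩
          exact comp_mem_ellis hcont he hfE
        · exact ⟨f, id, id_mem_ellis, rfl⟩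
        · rintro e he _ ⟨g, hg, rfl⟩
          exact ⟨e ∘ g, comp_mem_ellis hcont he hg, rfl⟩
      exact subset_antisymm hsub (hMmin.2 hCmem hsub)
    -- by minimality of the system, some f ∈ M fixes x
    have hxM : ∃ f ∈ M, f x = x := by
      obtain ⟨f0, hf0⟩ := hMC.2.2.1
      have horb : MulAction.orbit T (f0 x) ⊆ (fun f : X → X => f x) '' M := by
        rintro _ ⟨t, rfl⟩
        exact ⟨(fun a : X => t • a) ∘ f0, hMC.2.2.2 _ (smul_mem_ellis t) f0 hf0, rfl⟩
      have hclosed : IsClosed ((fun f : X → X => f x) '' M) :=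
        (hMC.2.1.isCompact.image (continuous_apply x)).isClosed
      have : (Set.univ : Set X) ⊆ (fun f : X → X => f x) '' M := by
        rw [← (hmin (f0 x)).closure_eq]
        exact closure_minimal horb hclosed
      obtain ⟨f, hf, hfx⟩ := this (Set.mem_univ x)
      exact ⟨f, hf, hfx⟩
    obtain ⟨f1, hf1M, hf1x⟩ := hxM
    have hf1y : f1 y = x := by rw [← hmerge f1 hf1M, hf1x]
    -- the closed subsemigroup A of maps sending y to x
    set A : Set (X → X) := M ∩ {f : X → X | f y = x} with hA
    have hAne : A.Nonempty := ⟨f1, hf1M, hf1y⟩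
    have hAcl : IsClosed A :=
      hMC.2.1.inter (isClosed_eq (continuous_apply y) continuous_const)
    have hAmul : ∀ f ∈ A, ∀ g ∈ A, f ∘ g ∈ A := by
      rintro f ⟨hfM, hfy⟩ g ⟨hgM, hgy⟩
      have hfy' : f y = x := hfy
      have hgy' : g y = x := hgy
      refine ⟨hMC.2.2.2 f (hMC.1 hfM) g hgM, ?_⟩
      show f (g y) = x
      rw [hgy', hmerge f hfM]
      exact hfy'
    -- get an idempotent in A
    have hidem : ∃ p ∈ A, p ∘ p = p := by
      letI : TopologicalSpace (Function.End X) := inferInstanceAs (TopologicalSpace (X → X))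
      letI : T2Space (Function.End X) := inferInstanceAs (T2Space (X → X))
      have hcm : ∀ r : Function.End X, Continuous (· * r) := fun r => continuous_comp_right r
      obtain ⟨p, hpA, hpp⟩ := exists_idempotent_in_compact_subsemigroup (M := Function.End X)
        hcm A hAne hAcl.isCompact hAmul
      exact ⟨p, hpA, hpp⟩
    obtain ⟨p, hpA, hpp⟩ := hidem
    have hpM : p ∈ M := hpA.1
    refine ⟨p, ⟨hMC.1 hpM, hpp, ?_⟩, hpA.2⟩
    intro I hI
    obtain ⟨hIE, ⟨g0, hg0⟩, hIdeal⟩ := hI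
    have hhI : g0 ∘ p ∈ I := (hIdeal p (hMC.1 hpM) g0 hg0).2
    have hhM : g0 ∘ p ∈ M := hMC.2.2.2 g0 (hIE hg0) p hpM
    have hEh := key (g0 ∘ p) hhM
    have hpmem : p ∈ (fun e : X → X => e ∘ (g0 ∘ p)) '' Ellis T X := by rw [hEh]; exact hpM
    obtain ⟨e, heE, hep⟩ := hpmem
    rw [← hep]
    exact (hIdeal e heE _ hhI).1
  · -- backward direction
    rintro ⟨p, ⟨hpE, hpp, -⟩, hpy⟩ ε hε
    have hpx : p x = x := by
      have h1 : p (p y) = p y := congrFun hpp y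
      rwa [hpy] at h1
    set U : Set (X → X) :=
      {f : X → X | dist (f x) x < ε / 2 ∧ dist (f y) x < ε / 2} with hU
    have hUopen : IsOpen U :=
      (isOpen_lt ((continuous_apply x).dist continuous_const) continuous_const).inter
        (isOpen_lt ((continuous_apply y).dist continuous_const) continuous_const)
    have hpU : p ∈ U := by
      constructor
      · simp only [Set.mem_setOf_eq, hpx, dist_self]; positivity
      · simp only [Set.mem_setOf_eq, hpy, dist_self]; positivity
    obtain ⟨f, hfU, t, rfl⟩ := mem_closure_iff.mp hpE U hUopen hpU
    refine ⟨t, ?_⟩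
    calc dist (t • x) (t • y) ≤ dist (t • x) x + dist x (t • y) := dist_triangle _ _ _
      _ < ε / 2 + ε / 2 := by
          rw [dist_comm x (t • y)]
          exact add_lt_add hfU.1 hfU.2
      _ = ε := by ring
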